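/- Let A be an integer matrix, let x, y ∈ ℤ^N with x, y ≥ 0, A·x = A·y, and suppose there is a distinguished coordinate ĉ with x_ĉ = 1 and y_ĉ = 0. Then there exists y' ∈ ℤ^N with y' ≥ 0, A·y' = A·x, y'_ĉ = 0, and x − y' an element of the Graver basis of A. -/

import Mathlib

def SignCompat {n : ℕ} (a b : Fin n → ℤ) : Prop := ∀ i, 0 ≤ a i * b i

def Conforms {n : ℕ} (a b : Fin n → ℤ) : Prop :=
  SignCompat a b ∧ ∀ i, |a i| ≤ |b i|

def InGraver {m n : ℕ} (A : Matrix (Fin m) (Fin n) ℤ) (g : Fin n → ℤ) : Prop :=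
  g ≠ 0 ∧ A.mulVec g = 0 ∧
    ∀ h : Fin n → ℤ, h ≠ 0 → A.mulVec h = 0 → Conforms h g → h = g

/-- Coordinatewise "between 0 and b" relation. -/
def Rcoord (a b : ℤ) : Prop := (0 ≤ a ∧ a ≤ b) ∨ (b ≤ a ∧ a ≤ 0)

lemma rcoord_of_conf {a b : ℤ} (h1 : 0 ≤ a * b) (h2 : |a| ≤ |b|) : Rcoord a b := by
  simp only [Int.abs_eq_natAbs] at h2
  rcases le_or_gt 0 a with ha | ha <;> rcases le_or_gt 0 b with hb | hb
  · left; omega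
  · have ha0 : a = 0 := by nlinarith
    right; omega
  · have hb0 : b = 0 := by nlinarith
    subst hb0; simp at h2; omega
  · right; omega

lemma conf_of_rcoord {a b : ℤ} (h : Rcoord a b) : 0 ≤ a * b ∧ |a| ≤ |b| := by
  constructor
  · rcases h with ⟨h1, h2⟩ | ⟨h1, h2⟩
    · exact mul_nonneg h1 (h1.trans h2)
    · nlinarith
  · simp only [Int.abs_eq_natAbs]
    rcases h with ⟨h1, h2⟩ | ⟨h1, h2⟩ <;> omega

lemma conforms_iff {n : ℕ} {a b : Fin n → ℤ} :
    Conforms a b ↔ ∀ i, Rcoord (a i) (b i) := by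
  constructor
  · rintro ⟨h1, h2⟩ i; exact rcoord_of_conf (h1 i) (h2 i)
  · intro h; exact ⟨fun i => (conf_of_rcoord (h i)).1, fun i => (conf_of_rcoord (h i)).2⟩

theorem stmt_8 (m N : ℕ) (A : Matrix (Fin m) (Fin N) ℤ)
    (x y : Fin N → ℤ) (hx : ∀ j, 0 ≤ x j) (hy : ∀ j, 0 ≤ y j)
    (hker : A.mulVec x = A.mulVec y)
    (chat : Fin N) (hxchat : x chat = 1) (hychat : y chat = 0) :
    ∃ y' : Fin N → ℤ, (∀ j, 0 ≤ y' j) ∧ A.mulVec y' = A.mulVec x ∧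
      y' chat = 0 ∧ InGraver A (x - y') := by
  classical
  set z : Fin N → ℤ := x - y with hzdef
  have hzker : A.mulVec z = 0 := by
    rw [hzdef, Matrix.mulVec_sub, hker, sub_self]
  have hzchat : z chat = 1 := by simp [hzdef, hxchat, hychat]
  -- the candidate set
  set P : (Fin N → ℤ) → Prop :=
    fun g => A.mulVec g = 0 ∧ (∀ i, Rcoord (g i) (z i)) ∧ g chat = 1 with hPdef
  set μ : (Fin N → ℤ) → ℕ := fun g => ∑ j, (g j).natAbs with hμdef
  have hPz : P z := by
    refine ⟨hzker, fun i => ?_, hzchat⟩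
    rcases le_or_gt 0 (z i) with h | h
    · left; omega
    · right; omega
  obtain ⟨n, hn, hnmin⟩ := Nat.lt_wfRel.wf.has_min (μ '' {g | P g}) ⟨μ z, ⟨z, hPz, rfl⟩⟩
  obtain ⟨g, hgP, hgn⟩ := hn
  have hmin : ∀ g', P g' → μ g ≤ μ g' := by
    intro g' hg'
    have h := hnmin (μ g') ⟨g', hg', rfl⟩
    change ¬ μ g' < n at h
    omega
  obtain ⟨hgker, hgR, hgchat⟩ := hgP
  refine ⟨x - g, ?_, ?_, ?_, ?_⟩
  · intro j
    have := hgR j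
    have hxj := hx j; have hyj := hy j
    have hzj : z j = x j - y j := by simp [hzdef]
    simp only [Pi.sub_apply]
    rw [hzj] at this
    rcases this with ⟨h1, h2⟩ | ⟨h1, h2⟩ <;> omega
  · rw [Matrix.mulVec_sub, hgker, sub_zero]
  · simp [hxchat, hgchat]
  · have hxg : x - (x - g) = g := by abel
    rw [hxg]
    refine ⟨?_, hgker, ?_⟩
    · intro h0
      have : g chat = 0 := by rw [h0]; rfl
      omega
    · intro h hne hhker hconf
      have hconfR := conforms_iff.mp hconf
      by_contra hne2
      -- h chat ∈ {0, 1}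
      have hhc := hconfR chat
      rw [hgchat] at hhc
      have hhchat : h chat = 0 ∨ h chat = 1 := by
        rcases hhc with ⟨h1, h2⟩ | ⟨h1, h2⟩ <;> omega
      rcases hhchat with hc0 | hc1
      · -- consider g - h
        have hPgh : P (g - h) := by
          refine ⟨?_, fun i => ?_, ?_⟩
          · rw [Matrix.mulVec_sub, hgker, hhker, sub_self]
          · have r1 := hconfR i
            have r2 := hgR i
            simp only [Pi.sub_apply]
            rcases r1 with ⟨a1, a2⟩ | ⟨a1, a2⟩ <;> rcases r2 with ⟨b1, b2⟩ | ⟨b1, b2⟩ <;>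
              [left; right; left; right] <;> omega
          · simp [hgchat, hc0]
        have hle := hmin _ hPgh
        -- but μ (g - h) < μ g since h ≠ 0
        obtain ⟨j, hj⟩ := Function.ne_iff.mp hne
        have hlt : μ (g - h) < μ g := by
          apply Finset.sum_lt_sum
          · intro i _
            have r1 := hconfR i
            simp only [Pi.sub_apply]
            rcases r1 with ⟨a1, a2⟩ | ⟨a1, a2⟩ <;> omega
          · refine ⟨j, Finset.mem_univ j, ?_⟩
            have r1 := hconfR j
            have hj0 : h j ≠ 0 := by simpa using hj
            simp only [Pi.sub_apply]
            rcases r1 with ⟨a1, a2⟩ | ⟨a1, a2⟩ <;> omega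
        omega
      · -- h itself is in P
        have hPh : P h := by
          refine ⟨hhker, fun i => ?_, hc1⟩
          have r1 := hconfR i
          have r2 := hgR i
          rcases r1 with ⟨a1, a2⟩ | ⟨a1, a2⟩ <;> rcases r2 with ⟨b1, b2⟩ | ⟨b1, b2⟩ <;>
            [left; right; left; right] <;> omega
        have hle := hmin _ hPh
        obtain ⟨j, hj⟩ := Function.ne_iff.mp hne2
        have hlt : μ h < μ g := by
          apply Finset.sum_lt_sum
          · intro i _
            have r1 := hconfR i
            rcases r1 with ⟨a1, a2⟩ | ⟨a1, a2⟩ <;> omega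
          · refine ⟨j, Finset.mem_univ j, ?_⟩
            have r1 := hconfR j
            rcases r1 with ⟨a1, a2⟩ | ⟨a1, a2⟩ <;> omega
        omega
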